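/- Let N be a rooted binary phylogenetic network on X, and let T be a phylogenetic X-tree. Then T is displayed by N if and only if there exists a switching of N that yields T. -/

import Mathlib

noncomputable section
attribute [local instance] Classical.propDecidable

/-! ### Directed graphs -/

structure Dgraph (V : Type) where
  verts : Finset V
  edges : Finset (V × V)
  edges_sub : ∀ e ∈ edges, e.1 ∈ verts ∧ e.2 ∈ verts

namespace Dgraph

variable {V : Type}

def edgeRel (G : Dgraph V) (u v : V) : Prop := (u, v) ∈ G.edges

def inDeg (G : Dgraph V) (v : V) : ℕ := (G.edges.filter (fun e => e.2 = v)).card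

def outDeg (G : Dgraph V) (v : V) : ℕ := (G.edges.filter (fun e => e.1 = v)).card

def Reaches (G : Dgraph V) (u v : V) : Prop := Relation.ReflTransGen G.edgeRel u v

def Acyclic (G : Dgraph V) : Prop := ∀ u v, G.edgeRel u v → ¬ G.Reaches v u

def leaves (G : Dgraph V) : Finset V := G.verts.filter (fun v => G.outDeg v = 0)

def IsSubgraph (H G : Dgraph V) : Prop := H.verts ⊆ G.verts ∧ H.edges ⊆ G.edges

def adj (G : Dgraph V) (u v : V) : Prop := (u, v) ∈ G.edges ∨ (v, u) ∈ G.edges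

def Connected (G : Dgraph V) : Prop :=
  ∀ u ∈ G.verts, ∀ v ∈ G.verts, Relation.ReflTransGen G.adj u v

def deleteVert (G : Dgraph V) (x : V) : Dgraph V where
  verts := G.verts.erase x
  edges := G.edges.filter (fun e => e.1 ≠ x ∧ e.2 ≠ x)
  edges_sub := by
    intro e he
    simp only [Finset.mem_filter] at he
    obtain ⟨he1, hx1, hx2⟩ := he
    exact ⟨Finset.mem_erase.mpr ⟨hx1, (G.edges_sub e he1).1⟩,
           Finset.mem_erase.mpr ⟨hx2, (G.edges_sub e he1).2⟩⟩

/-- A graph is biconnected if it is connected and cannot be disconnected by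
deleting exactly one of its vertices. -/
def Biconnected (G : Dgraph V) : Prop :=
  G.Connected ∧ ∀ x ∈ G.verts, (G.deleteVert x).Connected

/-- A biconnected component: a maximal biconnected subgraph. -/
def IsBicomp (G H : Dgraph V) : Prop :=
  H.IsSubgraph G ∧ H.Biconnected ∧
  ∀ H' : Dgraph V, H'.IsSubgraph G → H'.Biconnected → H.IsSubgraph H' → H' = H

/-- One subdivision step: replace an edge `(u,w)` by `(u,v)`, `(v,w)` for a new vertex `v`. -/
def SubdivStep (G G' : Dgraph V) : Prop :=
  ∃ u w v, (u, w) ∈ G.edges ∧ v ∉ G.verts ∧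
    G'.verts = insert v G.verts ∧
    G'.edges = insert (u, v) (insert (v, w) (G.edges.erase (u, w)))

/-- `S.IsSubdivisionOf G` : `S` can be obtained from `G` by repeatedly subdividing edges
(`G` is a subdivision of itself). -/
def IsSubdivisionOf (S G : Dgraph V) : Prop := Relation.ReflTransGen SubdivStep G S

end Dgraph

/-! ### Rooted binary phylogenetic networks -/

structure PhyloNet (V : Type) (X : Finset V) where
  G : Dgraph V
  root : V
  root_mem : root ∈ G.verts
  root_inDeg : G.inDeg root = 0
  root_outDeg : G.outDeg root = 1
  acyclic : G.Acyclic
  reach : ∀ v ∈ G.verts, G.Reaches root v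
  degrees : ∀ v ∈ G.verts, v ≠ root →
      (G.inDeg v = 1 ∧ G.outDeg v = 2) ∨ (G.inDeg v = 2 ∧ G.outDeg v = 1) ∨
      (G.inDeg v = 1 ∧ G.outDeg v = 0)
  leaves_eq : G.leaves = X
  Xnonempty : X.Nonempty

namespace PhyloNet

variable {V : Type} {X : Finset V}

def IsRetic (N : PhyloNet V X) (v : V) : Prop := N.G.inDeg v = 2

/-- A rooted binary phylogenetic `X`-tree: a network with no reticulations. -/
def IsTreeNet (N : PhyloNet V X) : Prop := ∀ v ∈ N.G.verts, N.G.inDeg v ≤ 1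

/-- `S` is an embedding of `T` in `N`: a subgraph of `N` containing the root of `N`
that is a subdivision of `T`. -/
def IsEmbedding (N : PhyloNet V X) (T : PhyloNet V X) (S : Dgraph V) : Prop :=
  S.IsSubgraph N.G ∧ N.root ∈ S.verts ∧ S.IsSubdivisionOf T.G

/-- `T` is displayed by `N`. -/
def Displays (N T : PhyloNet V X) : Prop :=
  T.IsTreeNet ∧ ∃ S : Dgraph V, N.IsEmbedding T S

/-- A blob of `N`: a biconnected component with at least one reticulation. -/
def IsBlob (N : PhyloNet V X) (B : Dgraph V) : Prop :=
  Dgraph.IsBicomp N.G B ∧ ∃ v ∈ B.verts, N.IsRetic v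

/-- `N` is level-`k`: every biconnected component has at most `k` reticulations. -/
def IsLevel (N : PhyloNet V X) (k : ℕ) : Prop :=
  ∀ H : Dgraph V, Dgraph.IsBicomp N.G H →
    (H.verts.filter (fun v => N.IsRetic v)).card ≤ k

def numRetic (N : PhyloNet V X) : ℕ := (N.G.verts.filter (fun v => N.IsRetic v)).card

/-- Children of a blob `B`: vertices outside `B` that are children of vertices of `B`. -/
def blobChildren (N : PhyloNet V X) (B : Dgraph V) : Finset V :=
  N.G.verts.filter (fun v => v ∉ B.verts ∧ ∃ u ∈ B.verts, (u, v) ∈ N.G.edges)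

/-- Cluster of a vertex: its set of descendant leaves. -/
def cl (N : PhyloNet V X) (v : V) : Finset V := X.filter (fun x => N.G.Reaches v x)

end PhyloNet

/-- Source of a blob: its unique vertex of in-degree zero and out-degree two within the blob. -/
def IsSource {V : Type} (B : Dgraph V) (s : V) : Prop :=
  s ∈ B.verts ∧ B.inDeg s = 0 ∧ B.outDeg s = 2

/-! ### Characters and parsimony -/

/-- A character on `X`: a function that is surjective from `X` onto the set `C` of states. -/
def IsCharacter {V C : Type} (X : Finset V) (f : V → C) : Prop :=
  ∀ c : C, ∃ x ∈ X, f x = c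

/-- An extension of a character `f` (agrees with `f` on the leaves `X`). -/
def IsExtension {V C : Type} (X : Finset V) (f F : V → C) : Prop :=
  ∀ x ∈ X, F x = f x

/-- Changing number of an assignment `F` on a digraph. -/
def ch {V C : Type} (F : V → C) (G : Dgraph V) : ℕ :=
  (G.edges.filter (fun e => F e.1 ≠ F e.2)).card

/-- Parsimony score of `f` on `G` (leaves `X`). -/
def PS {V C : Type} (X : Finset V) (f : V → C) (G : Dgraph V) : ℕ :=
  sInf {n | ∃ F : V → C, IsExtension X f F ∧ ch F G = n}

/-- Softwired parsimony score of a single character on a network. -/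
def PSsw {V C : Type} {X : Finset V} (N : PhyloNet V X) (f : V → C) : ℕ :=
  sInf {n | ∃ T : PhyloNet V X, N.Displays T ∧ PS X f T.G = n}

/-! ### Switchings -/

def reticEdges {V : Type} {X : Finset V} (N : PhyloNet V X) : Finset (V × V) :=
  N.G.edges.filter (fun e => N.G.inDeg e.2 = 2)

def IsSwitching {V : Type} {X : Finset V} (N : PhyloNet V X) (R : Finset (V × V)) : Prop :=
  R ⊆ reticEdges N ∧
  ∀ v ∈ N.G.verts, N.IsRetic v → (R.filter (fun e => e.2 = v)).card = 1

def switchGraph {V : Type} {X : Finset V} (N : PhyloNet V X) (R : Finset (V × V)) : Dgraph V where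
  verts := N.G.verts
  edges := N.G.edges \ (reticEdges N \ R)
  edges_sub := by
    intro e he
    exact N.G.edges_sub e (Finset.mem_sdiff.mp he).1

/-- Suppressing a vertex of in-degree one and out-degree one. -/
def SuppressStep {V : Type} (G G' : Dgraph V) : Prop :=
  ∃ u v w, (u, v) ∈ G.edges ∧ (v, w) ∈ G.edges ∧ G.inDeg v = 1 ∧ G.outDeg v = 1 ∧
    u ≠ v ∧ w ≠ v ∧
    G'.verts = G.verts.erase v ∧
    G'.edges = insert (u, w) ((G.edges.erase (u, v)).erase (v, w))

/-- Deleting a vertex of out-degree zero that is not a leaf in `X`. -/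
def DeleteLeafStep {V : Type} (X : Finset V) (G G' : Dgraph V) : Prop :=
  ∃ v ∈ G.verts, v ∉ X ∧ G.outDeg v = 0 ∧
    G'.verts = G.verts.erase v ∧
    G'.edges = G.edges.filter (fun e => e.2 ≠ v)

def CleanupStep {V : Type} (X : Finset V) (G G' : Dgraph V) : Prop :=
  SuppressStep G G' ∨ DeleteLeafStep X G G'

/-- The switching `R` yields the phylogenetic tree `T`. -/
def Yields {V : Type} {X : Finset V} (N : PhyloNet V X) (R : Finset (V × V))
    (T : PhyloNet V X) : Prop :=
  T.IsTreeNet ∧ Relation.ReflTransGen (CleanupStep X) (switchGraph N R) T.G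

/-- Switching distance `h(N) - |R ∩ R'|`. -/
def switchDist {V : Type} {X : Finset V} (N : PhyloNet V X) (R R' : Finset (V × V)) : ℕ :=
  N.numRetic - (R ∩ R').card

/-! ### rSPR -/

def relPow {α : Type} (r : α → α → Prop) : ℕ → α → α → Prop
  | 0, a, b => a = b
  | n + 1, a, b => ∃ c, r a c ∧ relPow r n c b

/-- A single rooted subtree prune and regraft operation. -/
def rSPRStep {V : Type} {X : Finset V} (T T' : PhyloNet V X) : Prop :=
  ∃ u v p c a b u',
    (u, v) ∈ T.G.edges ∧ u ≠ T.root ∧ v ≠ T.root ∧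
    (p, u) ∈ T.G.edges ∧ (u, c) ∈ T.G.edges ∧ c ≠ v ∧
    (a, b) ∈ insert (p, c) (((T.G.edges.erase (u, v)).erase (p, u)).erase (u, c)) ∧
    ¬ T.G.Reaches v a ∧ ¬ T.G.Reaches v b ∧
    u' ∉ T.G.verts.erase u ∧
    T'.root = T.root ∧
    T'.G.verts = insert u' (T.G.verts.erase u) ∧
    T'.G.edges = insert (a, u') (insert (u', b) (insert (u', v)
      ((insert (p, c) (((T.G.edges.erase (u, v)).erase (p, u)).erase (u, c))).erase (a, b))))

/-- rSPR distance: minimum number of rSPR operations transforming `T` into `T'`. -/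
def rSPRdist {V : Type} {X : Finset V} (T T' : PhyloNet V X) : ℕ :=
  sInf {n | relPow rSPRStep n T T'}

/-! ### Root paths -/

/-- `(u,v)` is an edge of the root path of `G` (with root `r`). -/
def rootPathEdge {V : Type} (G : Dgraph V) (r u v : V) : Prop :=
  (u, v) ∈ G.edges ∧ G.outDeg u = 1 ∧
  Relation.ReflTransGen (fun a b => (a, b) ∈ G.edges ∧ G.outDeg a = 1) r u

/-- `F` has no character-state transition on any edge of the root path. -/
def NoRootPathChange {V C : Type} (G : Dgraph V) (r : V) (F : V → C) : Prop :=
  ∀ u v, rootPathEdge G r u v → F u = F v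

/-! ### Informative blobs -/

/-- `ind(F,B,S) = 0`: `F` assigns the same state to all children of the blob `B`. -/
def SameOnChildren {V C : Type} {X : Finset V} (N : PhyloNet V X) (B : Dgraph V)
    (F : V → C) : Prop :=
  ∀ a ∈ N.blobChildren B, ∀ b ∈ N.blobChildren B, F a = F b

/-- The number of blobs `B` of `N` with `ind(F,B,S) = 1`. -/
def infBlobCount {V C : Type} {X : Finset V} (N : PhyloNet V X) (F : V → C) : ℕ :=
  Set.ncard {B : Dgraph V | N.IsBlob B ∧ ¬ SameOnChildren N B F}

/-- `b(f,N,S)`: the number of informative blobs of `N` relative to `S` and `f`. -/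
def blobScore {V C : Type} {X : Finset V} (N : PhyloNet V X) (f : V → C) (S : Dgraph V) : ℕ :=
  sInf {m | ∃ F : V → C, IsExtension X f F ∧ ch F S = PS X f S ∧ infBlobCount N F = m}

/-- `F` realises `b(f,N,S)`. -/
def Realises {V C : Type} {X : Finset V} (N : PhyloNet V X) (f : V → C) (S : Dgraph V)
    (F : V → C) : Prop :=
  IsExtension X f F ∧ ch F S = PS X f S ∧ infBlobCount N F = blobScore N f S

/-- A blob `B` is non-informative relative to `S` and `f`. -/
def NonInformative {V C : Type} {X : Finset V} (N : PhyloNet V X) (B S : Dgraph V)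
    (f : V → C) : Prop :=
  ∃ F : V → C, IsExtension X f F ∧ ch F S = PS X f S ∧ SameOnChildren N B F

/-! ### Blob reduction / cluster tree pairs -/

/-- Longest-path distance from the root. -/
def distFromRoot {V : Type} {X : Finset V} (N : PhyloNet V X) (v : V) : ℕ :=
  sSup {n | relPow N.G.edgeRel n N.root v}

/-- The subgraph of `S` rooted at `s`. -/
def subAt {V : Type} (S : Dgraph V) (s : V) : Dgraph V where
  verts := insert s (S.verts.filter (fun v => S.Reaches s v))
  edges := S.edges.filter (fun e => S.Reaches s e.1)
  edges_sub := by
    intro e he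
    simp only [Finset.mem_filter] at he
    obtain ⟨he1, hr⟩ := he
    refine ⟨Finset.mem_insert.mpr (Or.inr (Finset.mem_filter.mpr ⟨(S.edges_sub e he1).1, hr⟩)),
      Finset.mem_insert.mpr (Or.inr (Finset.mem_filter.mpr ⟨(S.edges_sub e he1).2, ?_⟩))⟩
    exact hr.tail (show S.edgeRel e.1 e.2 from he1)

/-- `S(Y)`: the subtree of `S` rooted at `s` together with a new root `ρY` and edge `(ρY, s)`. -/
def clusterY {V : Type} (S : Dgraph V) (s ρY : V) : Dgraph V where
  verts := insert ρY (subAt S s).verts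
  edges := insert (ρY, s) (subAt S s).edges
  edges_sub := by
    intro e he
    rcases Finset.mem_insert.mp he with h | h
    · subst h
      exact ⟨Finset.mem_insert_self _ _,
        Finset.mem_insert.mpr (Or.inr (Finset.mem_insert_self _ _))⟩
    · have h2 := (subAt S s).edges_sub e h
      exact ⟨Finset.mem_insert.mpr (Or.inr h2.1), Finset.mem_insert.mpr (Or.inr h2.2)⟩

/-- `S(Ȳ)`: `S` with the subtree rooted at `s` replaced by a single new leaf `y`. -/
def clusterYbar {V : Type} (S : Dgraph V) (s y : V) : Dgraph V where
  verts := insert y (S.verts.filter (fun v => ¬ S.Reaches s v))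
  edges := (S.edges.filter (fun e => ¬ S.Reaches s e.1 ∧ ¬ S.Reaches s e.2)) ∪
           ((S.edges.filter (fun e => e.2 = s ∧ ¬ S.Reaches s e.1)).image (fun e => (e.1, y)))
  edges_sub := by
    intro e he
    rcases Finset.mem_union.mp he with h | h
    · simp only [Finset.mem_filter] at h
      exact ⟨Finset.mem_insert.mpr (Or.inr (Finset.mem_filter.mpr ⟨(S.edges_sub _ h.1).1, h.2.1⟩)),
        Finset.mem_insert.mpr (Or.inr (Finset.mem_filter.mpr ⟨(S.edges_sub _ h.1).2, h.2.2⟩))⟩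
    · simp only [Finset.mem_image, Finset.mem_filter] at h
      obtain ⟨a, ⟨ha, _, hnr⟩, hae⟩ := h
      constructor
      · rw [← hae]
        exact Finset.mem_insert.mpr (Or.inr (Finset.mem_filter.mpr ⟨(S.edges_sub _ ha).1, hnr⟩))
      · rw [← hae]
        exact Finset.mem_insert_self _ _

/-- A pair of cluster extensions with respect to `f`. -/
def ClusterExtPair {V C : Type} (X Y : Finset V) (y ρY : V) (f FY FYb : V → C) : Prop :=
  (∀ x ∈ Y, FY x = f x) ∧ (∀ x ∈ X \ Y, FYb x = f x) ∧ FYb y = FY ρY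

/-! ### Parental trees -/

/-- A vertex of `U*(N)`: a directed path in `N` starting at the root. -/
def UstarVert {V : Type} {X : Finset V} (N : PhyloNet V X) (p : List V) : Prop :=
  p ≠ [] ∧ p.head? = some N.root ∧ p.Chain' (fun a b => (a, b) ∈ N.G.edges)

/-- An edge of `U*(N)`: `q` extends `p` by one additional edge of `N`. -/
def UstarEdge {V : Type} {X : Finset V} (N : PhyloNet V X) (p q : List V) : Prop :=
  UstarVert N p ∧ UstarVert N q ∧ ∃ w, q = p ++ [w]

/-- `T` is a parental tree of `N`: obtained from a subgraph of `U*(N)` by suppressing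
in-degree-one out-degree-one vertices; its leaves are labelled bijectively by `X`
via the endpoint of the corresponding path. -/
def IsParentalTree {V : Type} {X : Finset V} (N : PhyloNet V X) {L : Finset (List V)}
    (T : PhyloNet (List V) L) : Prop :=
  T.IsTreeNet ∧
  (∀ x ∈ X, ∃! p, p ∈ L ∧ p.getLast? = some x) ∧
  (∀ p ∈ L, ∃ x ∈ X, p.getLast? = some x) ∧
  ∃ H : Dgraph (List V),
    (∀ p ∈ H.verts, UstarVert N p) ∧
    (∀ e ∈ H.edges, UstarEdge N e.1 e.2) ∧
    Relation.ReflTransGen SuppressStep H T.G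

/-- Parsimony score of a character `f` on a tree whose leaves are labelled by
elements of `X` via the last vertex of the corresponding path. -/
def PSlab {V C : Type} (L : Finset (List V)) (f : V → C) (G : Dgraph (List V)) : ℕ :=
  sInf {n | ∃ F : List V → C,
    (∀ p ∈ L, ∀ x, p.getLast? = some x → F p = f x) ∧ ch F G = n}

/-- Parental parsimony score. -/
def PSpa {V C : Type} {X : Finset V} (N : PhyloNet V X) (f : V → C) : ℕ :=
  sInf {n | ∃ (L : Finset (List V)) (T : PhyloNet (List V) L),
    IsParentalTree N T ∧ PSlab L f T.G = n}

/-! ### Undirected graphs, semi-directed networks -/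

structure UGraph (V : Type) where
  verts : Finset V
  edges : Finset (Sym2 V)
  edges_sub : ∀ e ∈ edges, ∀ v ∈ e, v ∈ verts
  no_loops : ∀ e ∈ edges, ¬ e.IsDiag

namespace UGraph

variable {V : Type}

def adj (G : UGraph V) (u v : V) : Prop := s(u, v) ∈ G.edges

def degree (G : UGraph V) (v : V) : ℕ := (G.edges.filter (fun e => v ∈ e)).card

def Connected (G : UGraph V) : Prop :=
  ∀ u ∈ G.verts, ∀ v ∈ G.verts, Relation.ReflTransGen G.adj u v

end UGraph

/-- An unrooted binary phylogenetic `X`-tree: a connected undirected acyclic graph with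
leaf set `X` whose inner vertices all have degree three. -/
structure UTree (V : Type) (X : Finset V) where
  g : UGraph V
  connected : g.Connected
  card_eq : g.verts.card = g.edges.card + 1
  leaves_eq : g.verts.filter (fun v => g.degree v = 1) = X
  degree_cases : ∀ v ∈ g.verts, g.degree v = 1 ∨ g.degree v = 3

def USubdivStep {V : Type} (G G' : UGraph V) : Prop :=
  ∃ u w v, s(u, w) ∈ G.edges ∧ v ∉ G.verts ∧
    G'.verts = insert v G.verts ∧
    G'.edges = insert s(u, v) (insert s(v, w) (G.edges.erase s(u, w)))

def IsUSubdivisionOf {V : Type} (S G : UGraph V) : Prop :=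
  Relation.ReflTransGen USubdivStep G S

/-- A binary semi-directed network: directed (reticulation) edges and undirected edges. -/
structure SemiDir (V : Type) where
  verts : Finset V
  dirE : Finset (V × V)
  undirE : Finset (Sym2 V)
  dir_sub : ∀ e ∈ dirE, e.1 ∈ verts ∧ e.2 ∈ verts
  undir_sub : ∀ e ∈ undirE, ∀ v ∈ e, v ∈ verts
  dir_noloop : ∀ e ∈ dirE, e.1 ≠ e.2
  undir_noloop : ∀ e ∈ undirE, ¬ e.IsDiag

namespace SemiDir

variable {V : Type}

/-- The underlying undirected graph. -/
def und (Ns : SemiDir V) : UGraph V where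
  verts := Ns.verts
  edges := Ns.undirE ∪ Ns.dirE.image (fun e => s(e.1, e.2))
  edges_sub := by
    intro e he v hv
    rcases Finset.mem_union.mp he with h | h
    · exact Ns.undir_sub e h v hv
    · obtain ⟨a, ha, hae⟩ := Finset.mem_image.mp h
      rw [← hae] at hv
      rcases Sym2.mem_iff.mp hv with h1 | h1
      · rw [h1]; exact (Ns.dir_sub a ha).1
      · rw [h1]; exact (Ns.dir_sub a ha).2
  no_loops := by
    intro e he
    rcases Finset.mem_union.mp he with h | h
    · exact Ns.undir_noloop e h
    · obtain ⟨a, ha, hae⟩ := Finset.mem_image.mp h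
      rw [← hae]
      simp only [Sym2.isDiag_iff_proj_eq]
      exact Ns.dir_noloop a ha

def isRetic (Ns : SemiDir V) (v : V) : Prop :=
  (Ns.dirE.filter (fun e => e.2 = v)).card = 2

/-- An unrooted phylogenetic `X`-tree is displayed by a semi-directed network. -/
def Displays {X : Finset V} (Ns : SemiDir V) (Tu : UTree V X) : Prop :=
  ∃ S : SemiDir V, S.verts ⊆ Ns.verts ∧ S.dirE ⊆ Ns.dirE ∧ S.undirE ⊆ Ns.undirE ∧
    (∀ v : V, Ns.isRetic v → (S.dirE.filter (fun e => e.2 = v)).card ≤ 1) ∧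
    IsUSubdivisionOf S.und Tu.g

end SemiDir

/-- `Nr` is a rooted partner of `Ns`: `Ns` is obtained from `Nr` by deleting the root,
suppressing the child of the root, and omitting the direction of every
non-reticulation edge. -/
def RootedPartner {V : Type} {X : Finset V} (Nr : PhyloNet V X) (Ns : SemiDir V) : Prop :=
  ∃ v w w', (Nr.root, v) ∈ Nr.G.edges ∧ (v, w) ∈ Nr.G.edges ∧ (v, w') ∈ Nr.G.edges ∧ w ≠ w' ∧
    Ns.verts = (Nr.G.verts.erase Nr.root).erase v ∧
    Ns.dirE = Nr.G.edges.filter (fun e => Nr.G.inDeg e.2 = 2 ∧ e.1 ≠ v) ∧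
    Ns.undirE = insert s(w, w')
      ((Nr.G.edges.filter (fun e => Nr.G.inDeg e.2 ≠ 2 ∧ e.1 ≠ Nr.root ∧ e.1 ≠ v)).image
        (fun e => s(e.1, e.2)))

/-- `Tu` is obtained from the rooted tree `T` by deleting the root and suppressing
its child. -/
def UnrootOf {V : Type} {X : Finset V} (T : PhyloNet V X) (Tu : UTree V X) : Prop :=
  ∃ v w w', (T.root, v) ∈ T.G.edges ∧ (v, w) ∈ T.G.edges ∧ (v, w') ∈ T.G.edges ∧ w ≠ w' ∧
    Tu.g.verts = (T.G.verts.erase T.root).erase v ∧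
    Tu.g.edges = insert s(w, w')
      ((T.G.edges.filter (fun e => e.1 ≠ T.root ∧ e.1 ≠ v)).image (fun e => s(e.1, e.2)))

/-- Changing number on an undirected graph. -/
def chU {V C : Type} (F : V → C) (G : UGraph V) : ℕ :=
  (G.edges.filter (fun e => Sym2.lift ⟨fun a b => F a ≠ F b, fun a b => propext ne_comm⟩ e)).card

/-- Parsimony score on an undirected graph with leaf set `X`. -/
def PSU {V C : Type} (X : Finset V) (f : V → C) (G : UGraph V) : ℕ :=
  sInf {n | ∃ F : V → C, IsExtension X f F ∧ chU F G = n}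

/-- Softwired parsimony score of a character on a semi-directed network. -/
def PSswU {V C : Type} (X : Finset V) (Ns : SemiDir V) (f : V → C) : ℕ :=
  sInf {n | ∃ Tu : UTree V X, Ns.Displays Tu ∧ PSU X f Tu.g = n}


/-! ### Auxiliary lemmas -/

namespace ObsAux

variable {V : Type}

lemma dgraph_ext {G H : Dgraph V} (hv : G.verts = H.verts) (he : G.edges = H.edges) :
    G = H := by
  cases G; cases H; simp_all

lemma inDeg_def (G : Dgraph V) (v : V) :
    G.inDeg v = (G.edges.filter (fun e => e.2 = v)).card := rfl

lemma outDeg_def (G : Dgraph V) (v : V) :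
    G.outDeg v = (G.edges.filter (fun e => e.1 = v)).card := rfl

lemma inDeg_mono {G H : Dgraph V} (h : H.edges ⊆ G.edges) (v : V) :
    H.inDeg v ≤ G.inDeg v :=
  Finset.card_le_card (Finset.filter_subset_filter _ h)

lemma inDeg_eq_zero_of_not_mem {G : Dgraph V} {v : V} (h : v ∉ G.verts) :
    G.inDeg v = 0 := by
  rw [inDeg_def, Finset.card_eq_zero, Finset.filter_eq_empty_iff]
  intro e he hev
  exact h (hev ▸ (G.edges_sub e he).2)

lemma acyclic_mono {G H : Dgraph V} (h : H.edges ⊆ G.edges) (hG : G.Acyclic) :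
    H.Acyclic := by
  intro u v huv hr
  exact hG u v (h huv) (Relation.ReflTransGen.mono (fun a b (hab : H.edgeRel a b) => (h hab : G.edgeRel a b)) v u hr)

lemma switch_edges_subset {X : Finset V} (N : PhyloNet V X) (R : Finset (V × V)) :
    (switchGraph N R).edges ⊆ N.G.edges := Finset.sdiff_subset

lemma switch_verts {X : Finset V} (N : PhyloNet V X) (R : Finset (V × V)) :
    (switchGraph N R).verts = N.G.verts := rfl

lemma switch_filter_retic {X : Finset V} {N : PhyloNet V X} {R : Finset (V × V)}
    (hR : IsSwitching N R) {v : V} (h2 : N.G.inDeg v = 2) :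
    (switchGraph N R).edges.filter (fun e => e.2 = v) = R.filter (fun e => e.2 = v) := by
  ext e
  simp only [Finset.mem_filter, switchGraph, Finset.mem_sdiff, reticEdges]
  constructor
  · rintro ⟨⟨heN, hnot⟩, hev⟩
    refine ⟨?_, hev⟩
    by_contra heR
    exact hnot ⟨⟨heN, by rw [show e.2 = v from hev]; exact h2⟩, heR⟩
  · rintro ⟨heR, hev⟩
    have heN : e ∈ N.G.edges := (Finset.mem_filter.mp (hR.1 heR)).1
    exact ⟨⟨heN, fun h => h.2 heR⟩, hev⟩

lemma inDeg_switch_retic {X : Finset V} {N : PhyloNet V X} {R : Finset (V × V)}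
    (hR : IsSwitching N R) {v : V} (hv : v ∈ N.G.verts) (h2 : N.G.inDeg v = 2) :
    (switchGraph N R).inDeg v = 1 := by
  rw [ObsAux.inDeg_def, switch_filter_retic hR h2]
  exact hR.2 v hv h2

lemma inDeg_switch_le_one {X : Finset V} {N : PhyloNet V X} {R : Finset (V × V)}
    (hR : IsSwitching N R) (v : V) : (switchGraph N R).inDeg v ≤ 1 := by
  by_cases hv : v ∈ N.G.verts
  · by_cases hroot : v = N.root
    · subst hroot
      have h := ObsAux.inDeg_mono (switch_edges_subset N R) N.root
      rw [N.root_inDeg] at h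
      omega
    · rcases N.degrees v hv hroot with ⟨h1, _⟩ | ⟨h2, _⟩ | ⟨h1, _⟩
      · exact le_trans (ObsAux.inDeg_mono (switch_edges_subset N R) v) (le_of_eq h1)
      · exact le_of_eq (inDeg_switch_retic hR hv h2)
      · exact le_trans (ObsAux.inDeg_mono (switch_edges_subset N R) v) (le_of_eq h1)
  · have h0 : (switchGraph N R).inDeg v = 0 :=
      ObsAux.inDeg_eq_zero_of_not_mem (by rw [switch_verts]; exact hv)
    omega

lemma inDeg_switch_pos {X : Finset V} {N : PhyloNet V X} {R : Finset (V × V)}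
    (hR : IsSwitching N R) {v : V} (hv : v ∈ N.G.verts) (hroot : v ≠ N.root) :
    1 ≤ (switchGraph N R).inDeg v := by
  rcases N.degrees v hv hroot with ⟨h1, _⟩ | ⟨h2, _⟩ | ⟨h1, _⟩
  · -- in-degree one in N: the unique in-edge is not a reticulation edge
    rw [ObsAux.inDeg_def] at h1 ⊢
    have hne : (N.G.edges.filter (fun e => e.2 = v)).Nonempty := by
      rw [← Finset.card_pos, h1]; omega
    obtain ⟨e, he⟩ := hne
    rw [Finset.mem_filter] at he
    refine Finset.card_pos.mpr ⟨e, Finset.mem_filter.mpr ⟨?_, he.2⟩⟩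
    refine Finset.mem_sdiff.mpr ⟨he.1, fun hmem => ?_⟩
    have := (Finset.mem_filter.mp (Finset.mem_sdiff.mp hmem).1).2
    rw [he.2] at this
    rw [ObsAux.inDeg_def] at this
    omega
  · exact le_of_eq (inDeg_switch_retic hR hv h2).symm
  · rw [ObsAux.inDeg_def] at h1 ⊢
    have hne : (N.G.edges.filter (fun e => e.2 = v)).Nonempty := by
      rw [← Finset.card_pos, h1]; omega
    obtain ⟨e, he⟩ := hne
    rw [Finset.mem_filter] at he
    refine Finset.card_pos.mpr ⟨e, Finset.mem_filter.mpr ⟨?_, he.2⟩⟩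
    refine Finset.mem_sdiff.mpr ⟨he.1, fun hmem => ?_⟩
    have := (Finset.mem_filter.mp (Finset.mem_sdiff.mp hmem).1).2
    rw [he.2] at this
    rw [ObsAux.inDeg_def] at this
    omega

lemma card_le_one_eq {s : Finset (V × V)} (h : s.card ≤ 1) {a b : V × V}
    (ha : a ∈ s) (hb : b ∈ s) : a = b := Finset.card_le_one.mp h a ha b hb

lemma cleanup_step_inv {XX : Finset V} {G G' : Dgraph V}
    (hle : ∀ v, G.inDeg v ≤ 1) (h : CleanupStep XX G G') :
    (∀ v, G'.inDeg v ≤ 1) ∧ G'.verts ⊆ G.verts ∧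
      (∀ v ∈ G'.verts, G'.inDeg v = G.inDeg v) := by
  rcases h with ⟨u, v, w, huv, hvw, hdin, hdout, hune, hwne, hverts, hedges⟩ |
    ⟨v, hvmem, hvX, hdeg, hverts, hedges⟩
  · -- suppress step
    have hvin : (u, v) ∈ G.edges.filter (fun e => e.2 = v) :=
      Finset.mem_filter.mpr ⟨huv, rfl⟩
    have hwin : (v, w) ∈ G.edges.filter (fun e => e.2 = w) :=
      Finset.mem_filter.mpr ⟨hvw, rfl⟩
    have hcv : (G.edges.filter (fun e => e.2 = v)).card ≤ 1 := hle v
    have hcw : (G.edges.filter (fun e => e.2 = w)).card ≤ 1 := hle w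
    have hfv : G.edges.filter (fun e => e.2 = v) = {(u, v)} :=
      Finset.eq_singleton_iff_unique_mem.mpr ⟨hvin, fun x hx => card_le_one_eq hcv hx hvin⟩
    have hfw : G.edges.filter (fun e => e.2 = w) = {(v, w)} :=
      Finset.eq_singleton_iff_unique_mem.mpr ⟨hwin, fun x hx => card_le_one_eq hcw hx hwin⟩
    have hwv : w ≠ v := hwne
    have hvnw : v ≠ w := fun h => hwv h.symm
    have keyw : G'.inDeg w = G.inDeg w := by
      rw [inDeg_def, inDeg_def, hedges, hfw, Finset.filter_insert, if_pos rfl,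
        Finset.filter_erase, Finset.filter_erase, hfw]
      have h1 : ({(v, w)} : Finset (V × V)).erase (u, v) = {(v, w)} :=
        Finset.erase_eq_of_notMem (by
          simp only [Finset.mem_singleton, Prod.mk.injEq, not_and]
          intro _ hvw2; exact absurd hvw2 hvnw)
      rw [h1, Finset.erase_singleton]
      simp
    have keyv : G'.inDeg v = 0 := by
      rw [inDeg_def, hedges, Finset.filter_insert, if_neg (by exact hwv),
        Finset.filter_erase, Finset.filter_erase, hfv, Finset.erase_singleton,
        Finset.erase_empty, Finset.card_empty]
    have keyo : ∀ z, z ≠ v → z ≠ w → G'.inDeg z = G.inDeg z := by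
      intro z hzv hzw
      have h1 : (u, v) ∉ G.edges.filter (fun e => (e : V × V).2 = z) := by
        simp only [Finset.mem_filter, not_and]
        exact fun _ h => hzv h.symm
      have h2 : (v, w) ∉ (G.edges.filter (fun e => (e : V × V).2 = z)).erase (u, v) := by
        simp only [Finset.mem_erase, Finset.mem_filter, not_and]
        exact fun _ _ h => hzw h.symm
      rw [inDeg_def, inDeg_def, hedges, Finset.filter_insert,
        if_neg (by exact fun h => hzw h.symm),
        Finset.filter_erase, Finset.filter_erase,
        Finset.erase_eq_of_notMem h2, Finset.erase_eq_of_notMem h1]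
    refine ⟨?_, ?_, ?_⟩
    · intro z
      by_cases hzv : z = v
      · rw [hzv, keyv]; omega
      · by_cases hzw : z = w
        · rw [hzw, keyw]; exact hle w
        · rw [keyo z hzv hzw]; exact hle z
    · rw [hverts]; exact Finset.erase_subset _ _
    · intro z hz
      have hzv : z ≠ v := by rw [hverts] at hz; exact (Finset.mem_erase.mp hz).1
      by_cases hzw : z = w
      · rw [hzw]; exact keyw
      · exact keyo z hzv hzw
  · -- delete step
    have hsub : G'.edges ⊆ G.edges := by rw [hedges]; exact Finset.filter_subset _ _
    have keyo : ∀ z, z ≠ v → G'.inDeg z = G.inDeg z := by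
      intro z hzv
      rw [inDeg_def, inDeg_def]
      congr 1
      ext e
      rw [hedges]
      simp only [Finset.mem_filter]
      constructor
      · rintro ⟨⟨h1, _⟩, h3⟩; exact ⟨h1, h3⟩
      · rintro ⟨h1, h3⟩; exact ⟨⟨h1, by rw [h3]; exact hzv⟩, h3⟩
    refine ⟨fun z => le_trans (inDeg_mono hsub z) (hle z), ?_, ?_⟩
    · rw [hverts]; exact Finset.erase_subset _ _
    · intro z hz
      have hzv : z ≠ v := by rw [hverts] at hz; exact (Finset.mem_erase.mp hz).1
      exact keyo z hzv

lemma cleanup_chain_inv {XX : Finset V} {G G' : Dgraph V}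
    (h : Relation.ReflTransGen (CleanupStep XX) G G') (hle : ∀ v, G.inDeg v ≤ 1) :
    (∀ v, G'.inDeg v ≤ 1) ∧ ∀ v ∈ G'.verts, v ∈ G.verts ∧ G'.inDeg v = G.inDeg v := by
  induction h with
  | refl => exact ⟨hle, fun v hv => ⟨hv, rfl⟩⟩
  | tail hbc step ih =>
    obtain ⟨ih1, ih2⟩ := ih
    obtain ⟨s1, s2, s3⟩ := cleanup_step_inv ih1 step
    exact ⟨s1, fun v hv => ⟨(ih2 v (s2 hv)).1, (s3 v hv).trans (ih2 v (s2 hv)).2⟩⟩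

lemma subdivStep_inDeg' (Sa : Dgraph V) {Sb : Dgraph V} {u w v : V}
    (huw : (u, w) ∈ Sa.edges) (hv : v ∉ Sa.verts)
    (hedges : Sb.edges = insert (u, v) (insert (v, w) (Sa.edges.erase (u, w)))) :
    Sb.inDeg v = 1 ∧ ∀ z, z ≠ v → Sb.inDeg z = Sa.inDeg z := by
  have humem : u ∈ Sa.verts := (Sa.edges_sub _ huw).1
  have hwmem : w ∈ Sa.verts := (Sa.edges_sub _ huw).2
  have huv : u ≠ v := fun h => hv (h ▸ humem)
  have hwv : w ≠ v := fun h => hv (h ▸ hwmem)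
  constructor
  · have hempty : Sa.edges.filter (fun e => (e : V × V).2 = v) = ∅ := by
      rw [Finset.filter_eq_empty_iff]
      intro e he hev
      exact hv (hev ▸ (Sa.edges_sub e he).2)
    rw [inDeg_def, hedges, Finset.filter_insert, if_pos rfl, Finset.filter_insert,
      if_neg (by exact hwv), Finset.filter_erase, hempty, Finset.erase_empty]
    simp
  · intro z hzv
    by_cases hzw : z = w
    · subst hzw
      have hnm : (v, z) ∉ (Sa.edges.filter (fun e => (e : V × V).2 = z)).erase (u, z) := by
        simp only [Finset.mem_erase, Finset.mem_filter]
        rintro ⟨-, hmem, -⟩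
        exact hv ((Sa.edges_sub _ hmem).1)
      have hmemf : (u, z) ∈ Sa.edges.filter (fun e => (e : V × V).2 = z) :=
        Finset.mem_filter.mpr ⟨huw, rfl⟩
      have hpos : 0 < (Sa.edges.filter (fun e => (e : V × V).2 = z)).card :=
        Finset.card_pos.mpr ⟨_, hmemf⟩
      rw [inDeg_def, inDeg_def, hedges, Finset.filter_insert,
        if_neg (by exact fun h => hzv h.symm), Finset.filter_insert, if_pos rfl,
        Finset.filter_erase, Finset.card_insert_of_notMem hnm,
        Finset.card_erase_of_mem hmemf]
      omega
    · have h1 : (u, w) ∉ Sa.edges.filter (fun e => (e : V × V).2 = z) := by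
        simp only [Finset.mem_filter, not_and]
        exact fun _ h => hzw h.symm
      rw [inDeg_def, inDeg_def, hedges, Finset.filter_insert,
        if_neg (by exact fun h => hzv h.symm), Finset.filter_insert,
        if_neg (by exact fun h => hzw h.symm), Finset.filter_erase,
        Finset.erase_eq_of_notMem h1]

lemma subdivStep_inDeg {Sa Sb : Dgraph V} (h : Dgraph.SubdivStep Sa Sb) :
    ∃ v, v ∉ Sa.verts ∧ Sb.verts = insert v Sa.verts ∧ Sb.inDeg v = 1 ∧
      ∀ z, z ≠ v → Sb.inDeg z = Sa.inDeg z := by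
  obtain ⟨u, w, v, huw, hv, hverts, hedges⟩ := h
  obtain ⟨h1, h2⟩ := subdivStep_inDeg' Sa huw hv hedges
  exact ⟨v, hv, hverts, h1, h2⟩

lemma subdiv_chain_inv {T0 S : Dgraph V} (h : Relation.ReflTransGen Dgraph.SubdivStep T0 S) :
    T0.verts ⊆ S.verts ∧
    (∀ z ∈ T0.verts, S.inDeg z = T0.inDeg z) ∧
    (∀ z ∈ S.verts, z ∉ T0.verts → S.inDeg z = 1) ∧
    (∀ z, z ∉ S.verts → S.inDeg z = 0) := by
  induction h with
  | refl =>
    exact ⟨subset_rfl, fun z _ => rfl, fun z hz hz2 => absurd hz hz2,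
      fun z hz => inDeg_eq_zero_of_not_mem hz⟩
  | tail hbc step ih =>
    obtain ⟨ih1, ih2, ih3, ih4⟩ := ih
    obtain ⟨v, hv, hverts, hdeg1, hdego⟩ := subdivStep_inDeg step
    refine ⟨?_, ?_, ?_, ?_⟩
    · rw [hverts]; exact ih1.trans (Finset.subset_insert _ _)
    · intro z hz
      have hzv : z ≠ v := fun h => hv (h ▸ ih1 hz)
      rw [hdego z hzv]; exact ih2 z hz
    · intro z hz hz0
      by_cases hzv : z = v
      · rw [hzv]; exact hdeg1
      · rw [hdego z hzv]
        rw [hverts] at hz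
        exact ih3 z ((Finset.mem_insert.mp hz).resolve_left hzv) hz0
    · intro z hz
      have hzv : z ≠ v := fun h => hz (by rw [hverts, h]; exact Finset.mem_insert_self _ _)
      rw [hdego z hzv]
      exact ih4 z (fun h => hz (by rw [hverts]; exact Finset.mem_insert_of_mem h))

lemma subdivStep_suppress {G G' : Dgraph V} (h : Dgraph.SubdivStep G G') :
    SuppressStep G' G := by
  obtain ⟨u, w, v, huw, hv, hverts, hedges⟩ := h
  have humem : u ∈ G.verts := (G.edges_sub _ huw).1
  have hwmem : w ∈ G.verts := (G.edges_sub _ huw).2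
  have huv : u ≠ v := fun h => hv (h ▸ humem)
  have hwv : w ≠ v := fun h => hv (h ▸ hwmem)
  have hindeg : G'.inDeg v = 1 := (subdivStep_inDeg' G huw hv hedges).1
  have houtdeg : G'.outDeg v = 1 := by
    have hempty : G.edges.filter (fun e => (e : V × V).1 = v) = ∅ := by
      rw [Finset.filter_eq_empty_iff]
      intro e he hev
      exact hv (hev ▸ (G.edges_sub e he).1)
    rw [outDeg_def, hedges, Finset.filter_insert, if_neg (by exact huv),
      Finset.filter_insert, if_pos rfl, Finset.filter_erase, hempty, Finset.erase_empty]
    simp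
  refine ⟨u, v, w, ?_, ?_, hindeg, houtdeg, huv, hwv, ?_, ?_⟩
  · rw [hedges]; exact Finset.mem_insert_self _ _
  · rw [hedges]; exact Finset.mem_insert_of_mem (Finset.mem_insert_self _ _)
  · rw [hverts, Finset.erase_insert hv]
  · have h1 : (u, v) ∉ insert (v, w) (G.edges.erase (u, w)) := by
      simp only [Finset.mem_insert, Prod.mk.injEq]
      rintro (⟨h, -⟩ | hmem)
      · exact huv h
      · exact hv ((G.edges_sub _ (Finset.mem_of_mem_erase hmem)).2)
    have h2 : (v, w) ∉ G.edges.erase (u, w) := fun hmem =>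
      hv ((G.edges_sub _ (Finset.mem_of_mem_erase hmem)).1)
    rw [hedges, Finset.erase_insert h1, Finset.erase_insert h2, Finset.insert_erase huw]

lemma subdiv_reverse {A B : Dgraph V} (h : Relation.ReflTransGen Dgraph.SubdivStep A B) :
    Relation.ReflTransGen SuppressStep B A := by
  induction h with
  | refl => exact .refl
  | tail hbc step ih => exact Relation.ReflTransGen.head (subdivStep_suppress step) ih

lemma exists_sink (G : Dgraph V) (hac : G.Acyclic) :
    ∀ W : Finset V, W.Nonempty → (∀ e ∈ G.edges, e.1 ∈ W → e.2 ∈ W) →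
      ∃ v ∈ W, G.outDeg v = 0 := by
  intro W
  induction W using Finset.strongInductionOn with
  | _ W ih =>
    intro hne hcl
    obtain ⟨u, hu⟩ := hne
    by_cases hdeg : G.outDeg u = 0
    · exact ⟨u, hu, hdeg⟩
    · have hne2 : (G.edges.filter (fun e => (e : V × V).1 = u)).Nonempty := by
        rw [← Finset.card_pos]
        rw [outDeg_def] at hdeg
        omega
      obtain ⟨e, he⟩ := hne2
      rw [Finset.mem_filter] at he
      obtain ⟨a, b⟩ := e
      obtain ⟨heG, hau⟩ := he
      simp only at hau
      subst hau
      have hreach : G.Reaches a b := Relation.ReflTransGen.single heG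
      have hbmem : b ∈ W := hcl (a, b) heG hu
      have hba : b ≠ a := by
        intro h
        exact hac a b heG (by rw [h]; exact Relation.ReflTransGen.refl)
      have hW' : W.filter (fun x => G.Reaches a x ∧ x ≠ a) ⊂ W := by
        refine Finset.filter_ssubset.mpr ⟨a, hu, ?_⟩
        rintro ⟨-, h⟩; exact h rfl
      have hne' : (W.filter (fun x => G.Reaches a x ∧ x ≠ a)).Nonempty :=
        ⟨b, Finset.mem_filter.mpr ⟨hbmem, hreach, hba⟩⟩
      have hcl' : ∀ e ∈ G.edges, e.1 ∈ W.filter (fun x => G.Reaches a x ∧ x ≠ a) →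
          e.2 ∈ W.filter (fun x => G.Reaches a x ∧ x ≠ a) := by
        intro e' he' h1
        rw [Finset.mem_filter] at h1 ⊢
        obtain ⟨h1W, h1r, h1a⟩ := h1
        refine ⟨hcl e' he' h1W, h1r.tail he', fun h => ?_⟩
        exact hac e'.1 e'.2 he' (by rw [h]; exact h1r)
      obtain ⟨v, hv, hv0⟩ := ih _ hW' hne' hcl'
      exact ⟨v, Finset.mem_of_mem_filter _ hv, hv0⟩

lemma delete_set (XX : Finset V) :
    ∀ W : Finset V, ∀ G : Dgraph V, G.Acyclic → W ⊆ G.verts →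
      (∀ e ∈ G.edges, e.1 ∈ W → e.2 ∈ W) → (∀ v ∈ W, v ∉ XX) →
      ∃ G' : Dgraph V, Relation.ReflTransGen (CleanupStep XX) G G' ∧
        G'.verts = G.verts \ W ∧ G'.edges = G.edges.filter (fun e => e.2 ∉ W) := by
  intro W
  induction W using Finset.strongInductionOn with
  | _ W ih =>
    intro G hac hWsub hcl hX
    rcases W.eq_empty_or_nonempty with rfl | hne
    · refine ⟨G, .refl, by simp, ?_⟩
      exact (Finset.filter_true_of_mem (fun e _ => Finset.notMem_empty _)).symm
    · obtain ⟨v, hvW, hdeg⟩ := exists_sink G hac W hne hcl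
      have hvmem : v ∈ G.verts := hWsub hvW
      have hsrc : ∀ e ∈ G.edges, e.1 ≠ v := by
        intro e he h
        have hpos : 0 < (G.edges.filter (fun e => (e : V × V).1 = v)).card :=
          Finset.card_pos.mpr ⟨e, Finset.mem_filter.mpr ⟨he, h⟩⟩
        rw [outDeg_def] at hdeg
        omega
      refine ?_
      set G₁ : Dgraph V := ⟨G.verts.erase v, G.edges.filter (fun e => e.2 ≠ v), by
        intro e he
        rw [Finset.mem_filter] at he
        exact ⟨Finset.mem_erase.mpr ⟨hsrc e he.1, (G.edges_sub e he.1).1⟩,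
          Finset.mem_erase.mpr ⟨he.2, (G.edges_sub e he.1).2⟩⟩⟩ with hG₁
      have hstep : CleanupStep XX G G₁ := Or.inr ⟨v, hvmem, hX v hvW, hdeg, rfl, rfl⟩
      have hsub1 : G₁.edges ⊆ G.edges := Finset.filter_subset _ _
      obtain ⟨G', hchain, hv', he'⟩ := ih (W.erase v) (Finset.erase_ssubset hvW) G₁
        (acyclic_mono hsub1 hac)
        (by
          intro x hx
          rw [Finset.mem_erase] at hx
          exact Finset.mem_erase.mpr ⟨hx.1, hWsub hx.2⟩)
        (by
          intro e he h1
          rw [Finset.mem_filter] at he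
          exact Finset.mem_erase.mpr ⟨he.2, hcl e he.1 (Finset.mem_of_mem_erase h1)⟩)
        (fun x hx => hX x (Finset.mem_of_mem_erase hx))
      refine ⟨G', Relation.ReflTransGen.head hstep hchain, ?_, ?_⟩
      · rw [hv']
        ext x
        simp only [hG₁, Finset.mem_sdiff, Finset.mem_erase]
        constructor
        · rintro ⟨⟨hxv, hx⟩, h2⟩
          exact ⟨hx, fun hW => h2 ⟨hxv, hW⟩⟩
        · rintro ⟨hx, hW⟩
          exact ⟨⟨fun h => hW (h ▸ hvW), hx⟩, fun h => hW h.2⟩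
      · rw [he']
        ext e
        simp only [hG₁, Finset.mem_filter, Finset.mem_erase]
        constructor
        · rintro ⟨⟨h1, h2⟩, h3⟩
          exact ⟨h1, fun hW => h3 ⟨h2, hW⟩⟩
        · rintro ⟨h1, hW⟩
          exact ⟨⟨h1, fun h => hW (h ▸ hvW)⟩, fun h => hW h.2⟩

lemma pullback {XX : Finset V} {T0 : Dgraph V} {G G' : Dgraph V}
    (h : Relation.ReflTransGen (CleanupStep XX) G G') :
    ∀ S' : Dgraph V, S'.verts ⊆ G'.verts → S'.edges ⊆ G'.edges →
      Relation.ReflTransGen Dgraph.SubdivStep T0 S' →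
      ∃ S : Dgraph V, S.verts ⊆ G.verts ∧ S.edges ⊆ G.edges ∧
        Relation.ReflTransGen Dgraph.SubdivStep T0 S := by
  induction h using Relation.ReflTransGen.head_induction_on with
  | refl => exact fun S' h1 h2 h3 => ⟨S', h1, h2, h3⟩
  | @head G1 G2 step chain ih =>
    intro S' h1 h2 h3
    obtain ⟨S₁, hv1, he1, hsd1⟩ := ih S' h1 h2 h3
    rcases step with ⟨u, v, w, huv, hvw, hdin, hdout, hune, hwne, hverts, hedges⟩ |
      ⟨v, hvmem, hvX, hdeg, hverts, hedges⟩
    · -- suppress step G1 → G2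
      by_cases hmem : (u, w) ∈ S₁.edges
      · have hvS : v ∉ S₁.verts := by
          intro h
          have hc := hv1 h
          rw [hverts] at hc
          exact (Finset.mem_erase.mp hc).1 rfl
        have humem : u ∈ S₁.verts := (S₁.edges_sub _ hmem).1
        have hwmem : w ∈ S₁.verts := (S₁.edges_sub _ hmem).2
        refine ⟨⟨insert v S₁.verts, insert (u, v) (insert (v, w) (S₁.edges.erase (u, w))),
          ?_⟩, ?_, ?_, ?_⟩
        · intro e he
          rcases Finset.mem_insert.mp he with rfl | he2
          · exact ⟨Finset.mem_insert_of_mem humem, Finset.mem_insert_self _ _⟩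
          · rcases Finset.mem_insert.mp he2 with rfl | he3
            · exact ⟨Finset.mem_insert_self _ _, Finset.mem_insert_of_mem hwmem⟩
            · have hs := S₁.edges_sub _ (Finset.mem_of_mem_erase he3)
              exact ⟨Finset.mem_insert_of_mem hs.1, Finset.mem_insert_of_mem hs.2⟩
        · -- verts
          rw [Finset.insert_subset_iff]
          refine ⟨(G1.edges_sub _ huv).2, fun x hx => ?_⟩
          have hc := hv1 hx
          rw [hverts] at hc
          exact Finset.mem_of_mem_erase hc
        · -- edges
          intro e he
          rcases Finset.mem_insert.mp he with rfl | he2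
          · exact huv
          · rcases Finset.mem_insert.mp he2 with rfl | he3
            · exact hvw
            · have hne := (Finset.mem_erase.mp he3).1
              have hc := he1 (Finset.mem_of_mem_erase he3)
              rw [hedges] at hc
              rcases Finset.mem_insert.mp hc with h' | h'
              · exact absurd h' hne
              · exact Finset.mem_of_mem_erase (Finset.mem_of_mem_erase h')
        · exact hsd1.tail ⟨u, w, v, hmem, hvS, rfl, rfl⟩
      · refine ⟨S₁, fun x hx => ?_, fun e he => ?_, hsd1⟩
        · have hc := hv1 hx
          rw [hverts] at hc
          exact Finset.mem_of_mem_erase hc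
        · have hc := he1 he
          rw [hedges] at hc
          rcases Finset.mem_insert.mp hc with h' | h'
          · exact absurd (h' ▸ he) hmem
          · exact Finset.mem_of_mem_erase (Finset.mem_of_mem_erase h')
    · -- delete step
      refine ⟨S₁, fun x hx => ?_, fun e he => ?_, hsd1⟩
      · have hc := hv1 hx
        rw [hverts] at hc
        exact Finset.mem_of_mem_erase hc
      · have hc := he1 he
        rw [hedges] at hc
        exact Finset.mem_of_mem_filter _ hc

end ObsAux

/-- **Observation 1.** Let `N` be a rooted binary phylogenetic network on `X`, and let `T`
be a phylogenetic `X`-tree. Then `T` is displayed by `N` if and only if there exists a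
switching of `N` that yields `T`. -/
theorem displayed_iff_switching {V : Type} {X : Finset V} (N T : PhyloNet V X)
    (hT : T.IsTreeNet) :
    N.Displays T ↔ ∃ R : Finset (V × V), IsSwitching N R ∧ Yields N R T := by
  constructor
  · rintro ⟨hT', S, ⟨hSv, hSe⟩, hroot, hSdiv⟩
    obtain ⟨hI1, hI2, hI3, hI4⟩ := ObsAux.subdiv_chain_inv hSdiv
    have hTle : ∀ z, T.G.inDeg z ≤ 1 := by
      intro z
      by_cases hz : z ∈ T.G.verts
      · exact hT z hz
      · rw [ObsAux.inDeg_eq_zero_of_not_mem hz]; omega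
    have hSle : ∀ z, S.inDeg z ≤ 1 := by
      intro z
      by_cases hz : z ∈ T.G.verts
      · rw [hI2 z hz]; exact hTle z
      · by_cases hz2 : z ∈ S.verts
        · rw [hI3 z hz2 hz]
        · rw [hI4 z hz2]; omega
    have hTpos : ∀ z ∈ T.G.verts, z ≠ T.root → 1 ≤ T.G.inDeg z := by
      intro z hz hzr
      rcases T.degrees z hz hzr with ⟨h1, -⟩ | ⟨h1, -⟩ | ⟨h1, -⟩ <;> omega
    have hSpos : ∀ z ∈ S.verts, z ≠ T.root → 1 ≤ S.inDeg z := by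
      intro z hz hzr
      by_cases hz2 : z ∈ T.G.verts
      · rw [hI2 z hz2]; exact hTpos z hz2 hzr
      · rw [hI3 z hz hz2]
    have hrootT : N.root = T.root := by
      by_contra hne
      have h1 : 1 ≤ S.inDeg N.root := hSpos N.root hroot hne
      have h2 : S.inDeg N.root ≤ N.G.inDeg N.root := ObsAux.inDeg_mono hSe N.root
      rw [N.root_inDeg] at h2
      omega
    have hXS : X ⊆ S.verts := by
      intro x hx
      rw [← T.leaves_eq] at hx
      exact hI1 (Finset.mem_of_mem_filter _ hx)
    -- construct the switching
    obtain ⟨pick, hpick1, hpick2, hpick3⟩ : ∃ pick : V → V × V,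
        (∀ v, (pick v).2 = v) ∧
        (∀ v, N.G.inDeg v = 2 → pick v ∈ N.G.edges) ∧
        (∀ v, (S.edges.filter (fun e => (e : V × V).2 = v)).Nonempty →
          pick v ∈ S.edges) := by
      refine ⟨fun v =>
        if h : (S.edges.filter (fun e => (e : V × V).2 = v)).Nonempty then h.choose
        else if h2 : (N.G.edges.filter (fun e => (e : V × V).2 = v)).Nonempty then h2.choose
        else (v, v), ?_, ?_, ?_⟩
      · intro v
        dsimp only
        split_ifs with h h2
        · exact (Finset.mem_filter.mp h.choose_spec).2
        · exact (Finset.mem_filter.mp h2.choose_spec).2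
        · rfl
      · intro v h2deg
        have h2 : (N.G.edges.filter (fun e => (e : V × V).2 = v)).Nonempty := by
          rw [← Finset.card_pos, ← ObsAux.inDeg_def, h2deg]; omega
        dsimp only
        split_ifs with h
        · exact hSe (Finset.mem_of_mem_filter _ h.choose_spec)
        · exact Finset.mem_of_mem_filter _ h2.choose_spec
      · intro v hne
        dsimp only
        split_ifs
        exact Finset.mem_of_mem_filter _ hne.choose_spec
    set R : Finset (V × V) :=
      (N.G.verts.filter (fun v => N.G.inDeg v = 2)).image pick with hRdef
    have hRsub : R ⊆ reticEdges N := by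
      intro e he
      obtain ⟨a, ha, rfl⟩ := Finset.mem_image.mp he
      rw [Finset.mem_filter] at ha
      refine Finset.mem_filter.mpr ⟨hpick2 a ha.2, ?_⟩
      rw [hpick1 a]
      exact ha.2
    have hRcount : ∀ v ∈ N.G.verts, N.IsRetic v →
        (R.filter (fun e => e.2 = v)).card = 1 := by
      intro v hv hretic
      have hsing : R.filter (fun e => (e : V × V).2 = v) = {pick v} := by
        ext e
        simp only [hRdef, Finset.mem_filter, Finset.mem_image, Finset.mem_singleton]
        constructor
        · rintro ⟨⟨a, ha, rfl⟩, hev⟩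
          rw [hpick1 a] at hev
          rw [hev]
        · rintro rfl
          exact ⟨⟨v, ⟨hv, hretic⟩, rfl⟩, hpick1 v⟩
      rw [hsing, Finset.card_singleton]
    have hR : IsSwitching N R := ⟨hRsub, hRcount⟩
    have hSin : S.edges ⊆ (switchGraph N R).edges := by
      intro e he
      refine Finset.mem_sdiff.mpr ⟨hSe he, fun hmem => ?_⟩
      obtain ⟨hmem1, hmem2⟩ := Finset.mem_sdiff.mp hmem
      have h2 : N.G.inDeg e.2 = 2 := (Finset.mem_filter.mp hmem1).2
      have hne : (S.edges.filter (fun f => (f : V × V).2 = e.2)).Nonempty :=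
        ⟨e, Finset.mem_filter.mpr ⟨he, rfl⟩⟩
      have hpS : pick e.2 ∈ S.edges := hpick3 e.2 hne
      have hc : (S.edges.filter (fun f => (f : V × V).2 = e.2)).card ≤ 1 := hSle e.2
      have hpe : pick e.2 = e :=
        ObsAux.card_le_one_eq hc (Finset.mem_filter.mpr ⟨hpS, hpick1 e.2⟩)
          (Finset.mem_filter.mpr ⟨he, rfl⟩)
      exact hmem2 (Finset.mem_image.mpr ⟨e.2,
        Finset.mem_filter.mpr ⟨(N.G.edges_sub e (hSe he)).2, h2⟩, hpe⟩)
    have hK : ∀ e ∈ (switchGraph N R).edges, e.2 ∈ S.verts → e ∈ S.edges := by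
      intro e he hev
      by_cases hr : e.2 = T.root
      · exfalso
        have h0 : (switchGraph N R).inDeg N.root = 0 := by
          have hm := ObsAux.inDeg_mono (ObsAux.switch_edges_subset N R) N.root
          rw [N.root_inDeg] at hm
          omega
        have hmemf : e ∈ (switchGraph N R).edges.filter (fun f => (f : V × V).2 = N.root) :=
          Finset.mem_filter.mpr ⟨he, by rw [hr, ← hrootT]⟩
        have hpos := Finset.card_pos.mpr ⟨e, hmemf⟩
        rw [ObsAux.inDeg_def] at h0
        omega
      · have h1 : 1 ≤ S.inDeg e.2 := hSpos e.2 hev hr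
        rw [ObsAux.inDeg_def] at h1
        have h1' : 0 < (Finset.filter (fun f => (f : V × V).2 = e.2) S.edges).card := h1
        obtain ⟨f, hf⟩ := Finset.card_pos.mp h1'
        have hcle : ((switchGraph N R).edges.filter (fun g => (g : V × V).2 = e.2)).card ≤ 1 := by
          rw [← ObsAux.inDeg_def]
          exact ObsAux.inDeg_switch_le_one hR e.2
        have hfe : f = e := ObsAux.card_le_one_eq hcle
          (Finset.mem_filter.mpr ⟨hSin (Finset.mem_of_mem_filter _ hf),
            (Finset.mem_filter.mp hf).2⟩)
          (Finset.mem_filter.mpr ⟨he, rfl⟩)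
        rw [← hfe]
        exact Finset.mem_of_mem_filter _ hf
    -- delete the junk, then suppress
    obtain ⟨G₁, hchain, hv1, he1⟩ := ObsAux.delete_set X (N.G.verts \ S.verts)
      (switchGraph N R)
      (ObsAux.acyclic_mono (ObsAux.switch_edges_subset N R) N.acyclic)
      Finset.sdiff_subset
      (by
        intro e he h1
        refine Finset.mem_sdiff.mpr
          ⟨(N.G.edges_sub e (ObsAux.switch_edges_subset N R he)).2, fun hS => ?_⟩
        exact (Finset.mem_sdiff.mp h1).2 (S.edges_sub e (hK e he hS)).1)
      (fun v hv hx => (Finset.mem_sdiff.mp hv).2 (hXS hx))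
    have hG1S : G₁ = S := by
      refine ObsAux.dgraph_ext ?_ ?_
      · rw [hv1, ObsAux.switch_verts, Finset.sdiff_sdiff_self_left,
          Finset.inter_eq_right.mpr hSv]
      · rw [he1]
        ext e
        simp only [Finset.mem_filter, Finset.mem_sdiff, not_and, not_not]
        constructor
        · rintro ⟨he, h2⟩
          exact hK e he (h2 ((N.G.edges_sub e (ObsAux.switch_edges_subset N R he)).2))
        · intro heS
          exact ⟨hSin heS, fun _ => (S.edges_sub e heS).2⟩
    have chain2 : Relation.ReflTransGen (CleanupStep X) S T.G :=
      Relation.ReflTransGen.mono (fun a b (h : SuppressStep a b) => (Or.inl h : CleanupStep X a b)) S T.G (ObsAux.subdiv_reverse hSdiv)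
    exact ⟨R, hR, hT, hchain.trans (by rw [hG1S]; exact chain2)⟩
  · rintro ⟨R, hR, hT', hchain⟩
    obtain ⟨S, hSv, hSe, hSdiv⟩ :=
      ObsAux.pullback hchain T.G subset_rfl subset_rfl Relation.ReflTransGen.refl
    have hle : ∀ v, (switchGraph N R).inDeg v ≤ 1 := ObsAux.inDeg_switch_le_one hR
    obtain ⟨-, hsurv⟩ := ObsAux.cleanup_chain_inv hchain hle
    obtain ⟨hrmem, hrdeg⟩ := hsurv T.root T.root_mem
    have h0 : (switchGraph N R).inDeg T.root = 0 := by
      rw [← hrdeg]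
      exact T.root_inDeg
    have hroot : T.root = N.root := by
      by_contra hne
      have := ObsAux.inDeg_switch_pos hR (show T.root ∈ N.G.verts from hrmem) hne
      omega
    refine ⟨hT, S, ⟨hSv, hSe.trans (ObsAux.switch_edges_subset N R)⟩, ?_, hSdiv⟩
    have hmem : T.root ∈ S.verts := (ObsAux.subdiv_chain_inv hSdiv).1 T.root_mem
    rwa [hroot] at hmem

end
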